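/- Let A be a real symmetric m×m positive semidefinite matrix and B a real symmetric m×m matrix that is positive semidefinite on Null(A). Then the following are equivalent: (1) for all sufficiently small ε > 0, A + εB is positive semidefinite; (2) for every z ∈ Null(A) with z·Bz = 0 one has Bz = 0. -/

import Mathlib

open Matrix


private lemma coercive_aux {E : Type*} [NormedAddCommGroup E] [InnerProductSpace ℝ E]
    [FiniteDimensional ℝ E] (T : E →ₗ[ℝ] E) (W : Submodule ℝ E)
    (h : ∀ w ∈ W, w ≠ 0 → 0 < (inner ℝ w (T w) : ℝ)) :
    ∃ c > 0, ∀ w ∈ W, c * ‖w‖ ^ 2 ≤ (inner ℝ w (T w) : ℝ) := by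
  rcases eq_or_ne W ⊥ with rfl | hW
  · exact ⟨1, one_pos, fun w hw => by
      simp only [Submodule.mem_bot] at hw; simp [hw]⟩
  · obtain ⟨w₀, hw₀, hw₀0⟩ := Submodule.exists_mem_ne_zero_of_ne_bot hW
    set S : Set E := Metric.sphere 0 1 ∩ W with hS
    have hScpt : IsCompact S :=
      (isCompact_sphere 0 1).inter_right W.closed_of_finiteDimensional
    have hSne : S.Nonempty := by
      refine ⟨‖w₀‖⁻¹ • w₀, ?_, W.smul_mem _ hw₀⟩
      simp [norm_smul, norm_inv, inv_mul_cancel₀ (norm_ne_zero_iff.2 hw₀0)]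
    have hcont : Continuous fun w : E => (inner ℝ w (T w) : ℝ) :=
      continuous_id.inner T.continuous_of_finiteDimensional
    obtain ⟨u, huS, humin⟩ := hScpt.exists_isMinOn hSne hcont.continuousOn
    obtain ⟨hus, huW⟩ := huS
    have hu1 : ‖u‖ = 1 := by simpa using hus
    have hu0 : u ≠ 0 := by intro h0; rw [h0] at hu1; simp at hu1
    refine ⟨inner ℝ u (T u), h u huW hu0, fun w hw => ?_⟩
    rcases eq_or_ne w 0 with rfl | hw0
    · simp
    · have hnw : ‖w‖ ≠ 0 := norm_ne_zero_iff.2 hw0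
      set v := ‖w‖⁻¹ • w with hv
      have hvS : v ∈ S := by
        constructor
        · simp [hv, norm_smul, inv_mul_cancel₀ hnw]
        · exact W.smul_mem _ hw
      have hmin := humin hvS
      have hexp : (inner ℝ w (T w) : ℝ) = ‖w‖ ^ 2 * inner ℝ v (T v) := by
        have : w = ‖w‖ • v := by
          rw [hv, smul_smul, mul_inv_cancel₀ hnw, one_smul]
        conv_lhs => rw [this]
        rw [T.map_smul, real_inner_smul_left, real_inner_smul_right]
        ring
      rw [hexp]
      have h2 : (0:ℝ) ≤ ‖w‖ ^ 2 := sq_nonneg _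
      calc (inner ℝ u (T u) : ℝ) * ‖w‖ ^ 2 ≤ (inner ℝ v (T v) : ℝ) * ‖w‖ ^ 2 := by
            exact mul_le_mul_of_nonneg_right hmin h2
        _ = ‖w‖ ^ 2 * inner ℝ v (T v) := by ring

private lemma opbound_aux {E : Type*} [NormedAddCommGroup E] [InnerProductSpace ℝ E]
    [FiniteDimensional ℝ E] (T : E →ₗ[ℝ] E) :
    ∃ C > 0, ∀ u v : E, |(inner ℝ u (T v) : ℝ)| ≤ C * (‖u‖ * ‖v‖) := by
  set T' := LinearMap.toContinuousLinearMap T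
  refine ⟨‖T'‖ + 1, by positivity, fun u v => ?_⟩
  calc |(inner ℝ u (T v) : ℝ)| ≤ ‖u‖ * ‖T v‖ := abs_real_inner_le_norm _ _
    _ ≤ ‖u‖ * ((‖T'‖ + 1) * ‖v‖) := by
        refine mul_le_mul_of_nonneg_left ?_ (norm_nonneg _)
        calc ‖T v‖ = ‖T' v‖ := rfl
          _ ≤ ‖T'‖ * ‖v‖ := T'.le_opNorm v
          _ ≤ (‖T'‖ + 1) * ‖v‖ := by nlinarith [norm_nonneg T', norm_nonneg v]
    _ = (‖T'‖ + 1) * (‖u‖ * ‖v‖) := by ring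

private lemma arith_aux (lam mu Cb ε a b P q1 q2 q3 q4 : ℝ)
    (hlam : 0 < lam) (hmu : 0 < mu) (hCb : 0 < Cb) (hε : 0 < ε)
    (hP : lam * a ^ 2 ≤ P)
    (h1 : -(Cb * (a * a)) ≤ q1) (h2 : -(Cb * (a * b)) ≤ q2)
    (h3 : -(Cb * (b * a)) ≤ q3) (h4 : mu * b ^ 2 ≤ q4)
    (he1 : 2 * ε * Cb ≤ lam) (he2 : 2 * ε * Cb ^ 2 ≤ lam * mu) :
    0 ≤ P + ε * (q1 + q2 + q3 + q4) := by
  have key : 0 ≤ lam * (P + ε * (q1 + q2 + q3 + q4)) := by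
    nlinarith [sq_nonneg (lam * a - 2 * ε * Cb * b),
      mul_nonneg (sub_nonneg.2 he1) (sq_nonneg a),
      mul_nonneg (mul_nonneg hε.le (sub_nonneg.2 he2)) (sq_nonneg b),
      mul_nonneg hε.le (mul_nonneg hCb.le (sq_nonneg (a - b))),
      mul_nonneg hε.le (mul_nonneg hCb.le (sq_nonneg (a + b))),
      mul_pos hε hlam, mul_pos hε hCb]
  nlinarith [key, hlam]

theorem possemidef_perturbation_iff {m : ℕ} (A B : Matrix (Fin m) (Fin m) ℝ)
    (hA : A.PosSemidef) (hB : B.IsSymm)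
    (hBnull : ∀ z : Fin m → ℝ, A.mulVec z = 0 → 0 ≤ z ⬝ᵥ B.mulVec z) :
    (∃ ε₀ > 0, ∀ ε : ℝ, 0 < ε → ε ≤ ε₀ → (A + ε • B).PosSemidef) ↔
    (∀ z : Fin m → ℝ, A.mulVec z = 0 → z ⬝ᵥ B.mulVec z = 0 → B.mulVec z = 0) := by
  constructor
  · rintro ⟨ε₀, hε₀, h⟩ z hz hzB
    have hps := h ε₀ hε₀ le_rfl
    have hstar : star z = z := funext fun i => star_trivial _
    have key : (A + ε₀ • B) *ᵥ z = 0 := by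
      rw [← hps.dotProduct_mulVec_zero_iff z, hstar, add_mulVec, smul_mulVec, hz,
        zero_add, dotProduct_smul, smul_eq_mul, hzB, mul_zero]
    rw [add_mulVec, hz, zero_add, smul_mulVec] at key
    exact (smul_eq_zero.mp key).resolve_left (ne_of_gt hε₀)
  · intro h2
    -- transfer to Euclidean space
    set E := EuclideanSpace ℝ (Fin m)
    set e : E ≃ (Fin m → ℝ) := WithLp.equiv 2 (Fin m → ℝ) with he
    set TA : E →ₗ[ℝ] E := Matrix.toEuclideanLin A with hTA
    set TB : E →ₗ[ℝ] E := Matrix.toEuclideanLin B with hTBdef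
    have hbrA : ∀ x y : E, (inner ℝ x (TA y) : ℝ) = (e x) ⬝ᵥ A *ᵥ (e y) := fun x y => by
      rw [EuclideanSpace.inner_eq_star_dotProduct, dotProduct_comm]; rfl
    have hbrB : ∀ x y : E, (inner ℝ x (TB y) : ℝ) = (e x) ⬝ᵥ B *ᵥ (e y) := fun x y => by
      rw [EuclideanSpace.inner_eq_star_dotProduct, dotProduct_comm]; rfl
    have hsymA : TA.IsSymmetric := isHermitian_iff_isSymmetric.mp hA.1
    have hBH : B.IsHermitian := by
      have : Bᴴ = Bᵀ := by
        funext i j; simp [conjTranspose_apply, transpose_apply]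
      rw [Matrix.IsHermitian, this]; exact hB
    have hsymB : TB.IsSymmetric := isHermitian_iff_isSymmetric.mp hBH
    set N : Submodule ℝ E := LinearMap.ker TA with hN
    set K : Submodule ℝ E := N ⊓ LinearMap.ker TB with hK
    have hkerA : ∀ x : E, TA x = 0 ↔ A *ᵥ e x = 0 := fun x =>
      ⟨fun h => congrArg WithLp.ofLp h, fun h => congrArg (WithLp.toLp 2) h⟩
    have hkerB : ∀ x : E, TB x = 0 ↔ B *ᵥ e x = 0 := fun x =>
      ⟨fun h => congrArg WithLp.ofLp h, fun h => congrArg (WithLp.toLp 2) h⟩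
    have hstar : ∀ z : Fin m → ℝ, star z = z := fun z => funext fun i => star_trivial _
    have hpsdA : ∀ x : E, 0 ≤ (inner ℝ x (TA x) : ℝ) := by
      intro x
      have := hA.dotProduct_mulVec_nonneg (e x)
      rw [hstar] at this
      rwa [hbrA]
    have hAzero : ∀ x : E, (inner ℝ x (TA x) : ℝ) = 0 → TA x = 0 := by
      intro x hx
      rw [hkerA]
      rw [← hA.dotProduct_mulVec_zero_iff (e x), hstar]
      rw [← hbrA]; exact hx
    obtain ⟨lam, hlam, hlamW⟩ := coercive_aux TA Nᗮ (by
      intro w hw hw0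
      refine lt_of_le_of_ne (hpsdA w) fun heq => hw0 ?_
      have hwN : w ∈ N := LinearMap.mem_ker.mpr (hAzero w heq.symm)
      exact Submodule.disjoint_def.mp N.orthogonal_disjoint w hwN hw)
    obtain ⟨mu, hmu, hmuW⟩ := coercive_aux TB (Kᗮ ⊓ N) (by
      intro w hw hw0
      have hwN : w ∈ N := hw.2
      have hAw : A *ᵥ e w = 0 := (hkerA w).mp (LinearMap.mem_ker.mp hwN)
      have hnn : 0 ≤ (inner ℝ w (TB w) : ℝ) := by rw [hbrB]; exact hBnull (e w) hAw
      refine lt_of_le_of_ne hnn fun heq => hw0 ?_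
      have hBw : B *ᵥ e w = 0 := h2 (e w) hAw (by rw [← hbrB]; exact heq.symm)
      have hwK : w ∈ K := ⟨hwN, LinearMap.mem_ker.mpr ((hkerB w).mpr hBw)⟩
      exact Submodule.disjoint_def.mp K.orthogonal_disjoint w hwK hw.1)
    obtain ⟨Cb, hCb, hCbB⟩ := opbound_aux TB
    refine ⟨min (lam / (2 * Cb)) (lam * mu / (2 * Cb ^ 2)), by positivity, fun ε hε hεle => ?_⟩
    have he1 : 2 * ε * Cb ≤ lam := by
      have := le_trans hεle (min_le_left _ _)
      rw [le_div_iff₀ (by positivity)] at this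
      nlinarith
    have he2 : 2 * ε * Cb ^ 2 ≤ lam * mu := by
      have := le_trans hεle (min_le_right _ _)
      rw [le_div_iff₀ (by positivity)] at this
      nlinarith
    refine posSemidef_iff_dotProduct_mulVec.mpr ⟨?_, ?_⟩
    · have hsA : Aᴴ = A := hA.1
      have hsB : Bᴴ = B := hBH
      rw [Matrix.IsHermitian, conjTranspose_add, conjTranspose_smul, hsA, hsB, star_trivial]
    · intro x
      rw [hstar x]
      set xe : E := e.symm x with hxe
      obtain ⟨n, hn, y, hy, hxdec⟩ := N.exists_add_mem_mem_orthogonal xe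
      obtain ⟨k, hk, w, hwperp, hndec⟩ := K.exists_add_mem_mem_orthogonal n
      have hkN : k ∈ N := hk.1
      have hwN : w ∈ N := by
        have : n - k ∈ N := N.sub_mem hn hkN
        have hw' : w = n - k := by rw [hndec]; abel
        rwa [hw']
      have hTAy0 : TA (k + w) = 0 := by
        rw [map_add, LinearMap.mem_ker.mp hkN, LinearMap.mem_ker.mp hwN, add_zero]
      have hTBk : TB k = 0 := LinearMap.mem_ker.mp hk.2
      have hxeysum : xe = y + (k + w) := by rw [hxdec, hndec]; abel
      have hgoal : x ⬝ᵥ (A + ε • B) *ᵥ x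
          = (inner ℝ xe (TA xe) : ℝ) + ε * (inner ℝ xe (TB xe) : ℝ) := by
        rw [hbrA, hbrB, add_mulVec, smul_mulVec, dotProduct_add, dotProduct_smul,
          smul_eq_mul]
        rfl
      rw [hgoal]
      have hA1 : (inner ℝ xe (TA xe) : ℝ) = inner ℝ y (TA y) := by
        rw [hxeysum, map_add, hTAy0, add_zero, inner_add_left]
        have hz : (inner ℝ (k + w) (TA y) : ℝ) = 0 := by
          rw [← hsymA, hTAy0, inner_zero_left]
        rw [hz, add_zero]
      have hB1 : (inner ℝ xe (TB xe) : ℝ) = inner ℝ (y + w) (TB (y + w)) := by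
        have hxe2 : xe = (y + w) + k := by rw [hxeysum]; abel
        have hTBxe : TB xe = TB (y + w) := by
          rw [hxe2, map_add, hTBk, add_zero]
        rw [hTBxe, hxe2, inner_add_left]
        have hz : (inner ℝ k (TB (y + w)) : ℝ) = 0 := by
          rw [← hsymB, hTBk, inner_zero_left]
        rw [hz, add_zero]
      have hB2 : (inner ℝ (y + w) (TB (y + w)) : ℝ)
          = inner ℝ y (TB y) + inner ℝ y (TB w) + inner ℝ w (TB y) + inner ℝ w (TB w) := by
        rw [map_add, inner_add_left, inner_add_right, inner_add_right]
        ring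
      rw [hA1, hB1, hB2]
      have hy1 : lam * ‖y‖ ^ 2 ≤ (inner ℝ y (TA y) : ℝ) := hlamW y hy
      have hw1 : mu * ‖w‖ ^ 2 ≤ (inner ℝ w (TB w) : ℝ) := hmuW w ⟨hwperp, hwN⟩
      have hc1 := abs_le.mp (hCbB y y)
      have hc2 := abs_le.mp (hCbB y w)
      have hc3 := abs_le.mp (hCbB w y)
      exact arith_aux lam mu Cb ε ‖y‖ ‖w‖ _ _ _ _ _ hlam hmu hCb hε hy1 hc1.1 hc2.1 hc3.1 hw1 he1 he2
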